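/- arXiv:1411.3264 — 2 statements merged into one kernel-verified Lean document; each statement's English description precedes it below -/
import Mathlib

section
/- For a unit vector $n\in\mathbb{R}^3$ and a real $3\times 3$ matrix $D$, define $\mathrm{div}(D)=\mathrm{tr}\,D$, let $c(D)\in\mathbb{R}^3$ be the axial vector with components $c(D)_i=\varepsilon_{ijk}D_{kj}$ (so that $c(\nabla n)=\mathrm{curl}\,n$), and set $W(n,D)=K_1(\mathrm{tr}\,D)^2+K_2(n\cdot c(D))^2+K_3|n\times c(D)|^2+(K_2+K_4)(\mathrm{tr}(D^2)-(\mathrm{tr}\,D)^2)$. If the Ericksen inequalities $2K_1>K_2+K_4$, $K_2>|K_4|$, $K_3>0$ hold, then there exist constants $C'>0$ and $C>0$ such that $C'|D|^2\le W(n,D)$ for all unit vectors $n$ and all $D$ satisfying $D^Tn=0$, and $W(n,D)\le C|D|^2$ for all unit vectors $n$ and all $D$. -/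
open Matrix

/-- The axial vector `c(D)` of a `3×3` matrix, with components `c(D)ᵢ = ε_{ijk} D_{kj}`,
so that `c(∇n) = curl n`. -/
def axialVec (D : Matrix (Fin 3) (Fin 3) ℝ) : Fin 3 → ℝ :=
  ![D 2 1 - D 1 2, D 0 2 - D 2 0, D 1 0 - D 0 1]

/-- The Oseen–Frank energy density (case `q₀ = 0`) evaluated at director `n` and
director gradient `D`. -/
def oseenFrank (K₁ K₂ K₃ K₄ : ℝ) (n : Fin 3 → ℝ) (D : Matrix (Fin 3) (Fin 3) ℝ) : ℝ :=
  K₁ * D.trace ^ 2 + K₂ * (n ⬝ᵥ axialVec D) ^ 2 +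
    K₃ * ((n ⨯₃ axialVec D) ⬝ᵥ (n ⨯₃ axialVec D)) +
    (K₂ + K₄) * ((D * D).trace - D.trace ^ 2)

private lemma aux_lower (K₁ K₂ K₃ K₄ t a b2 tr2 N : ℝ)
    (h1 : K₂ + K₄ < 2 * K₁) (h2 : |K₄| < K₂) (h3 : 0 < K₃)
    (hb2 : 0 ≤ b2) (hab : a ^ 2 + b2 = N - tr2)
    (hkey : 0 ≤ 2 * tr2 - t ^ 2 + a ^ 2) :
    min (min (2 * K₁ - (K₂ + K₄)) (K₂ - K₄)) (min K₃ (K₂ + K₄)) * N ≤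
      K₁ * t ^ 2 + K₂ * a ^ 2 + K₃ * b2 + (K₂ + K₄) * (tr2 - t ^ 2) := by
  obtain ⟨h2a, h2b⟩ := abs_lt.mp h2
  set c₀ : ℝ := min (min (2 * K₁ - (K₂ + K₄)) (K₂ - K₄)) (min K₃ (K₂ + K₄)) with hc
  have hc1 : c₀ ≤ 2 * K₁ - (K₂ + K₄) := le_trans (min_le_left _ _) (min_le_left _ _)
  have hc2 : c₀ ≤ K₂ - K₄ := le_trans (min_le_left _ _) (min_le_right _ _)
  have hc3 : c₀ ≤ K₃ := le_trans (min_le_right _ _) (min_le_left _ _)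
  have hc4 : c₀ ≤ K₂ + K₄ := le_trans (min_le_right _ _) (min_le_right _ _)
  nlinarith [mul_nonneg (by linarith : (0:ℝ) ≤ 2 * K₁ - (K₂ + K₄) - c₀) (sq_nonneg t),
    mul_nonneg (by linarith : (0:ℝ) ≤ K₂ - K₄ - c₀) (sq_nonneg a),
    mul_nonneg (by linarith : (0:ℝ) ≤ K₃ - c₀) hb2,
    mul_nonneg (by linarith : (0:ℝ) ≤ K₂ + K₄ - c₀) hkey]

private lemma aux_upper (K₁ K₂ K₃ K₄ t a b2 tr2 N : ℝ) (h3 : 0 < K₃)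
    (hb2 : 0 ≤ b2) (hab : a ^ 2 + b2 = N - tr2)
    (ht : t ^ 2 ≤ 3 * N) (htr : tr2 ≤ N) (htr2 : -N ≤ tr2) (hN : 0 ≤ N) :
    K₁ * t ^ 2 + K₂ * a ^ 2 + K₃ * b2 + (K₂ + K₄) * (tr2 - t ^ 2) ≤
      (3 * |K₁| + 2 * |K₂| + 2 * K₃ + 4 * |K₂ + K₄| + 1) * N := by
  have ht0 : (0:ℝ) ≤ t ^ 2 := sq_nonneg t
  have ha0 : (0:ℝ) ≤ a ^ 2 := sq_nonneg a
  have ha2 : a ^ 2 ≤ 2 * N := by linarith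
  have hb2' : b2 ≤ 2 * N := by linarith
  nlinarith [mul_nonneg (sub_nonneg.2 (le_abs_self K₁)) (sq_nonneg t),
    mul_nonneg (abs_nonneg K₁) (by linarith : (0:ℝ) ≤ 3 * N - t ^ 2),
    mul_nonneg (sub_nonneg.2 (le_abs_self K₂)) (sq_nonneg a),
    mul_nonneg (abs_nonneg K₂) (by linarith : (0:ℝ) ≤ 2 * N - a ^ 2),
    mul_nonneg (by have := le_abs_self (K₂ + K₄); linarith : (0:ℝ) ≤ |K₂ + K₄| - (K₂ + K₄)) (by linarith : (0:ℝ) ≤ 4 * N + (tr2 - t ^ 2)),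
    mul_nonneg (by have := neg_abs_le (K₂ + K₄); linarith : (0:ℝ) ≤ |K₂ + K₄| + (K₂ + K₄)) (by linarith : (0:ℝ) ≤ 4 * N - (tr2 - t ^ 2)),
    mul_nonneg h3.le (by linarith : (0:ℝ) ≤ 2 * N - b2), hN]

set_option maxHeartbeats 1000000

/-- under the Ericksen inequalities `2K₁ > K₂ + K₄`, `K₂ > |K₄|`, `K₃ > 0`,
there are constants `C' > 0` and `C > 0` with `C'|D|² ≤ W(n,D)` for all unit `n` and all `D`
with `Dᵀn = 0`, and `W(n,D) ≤ C|D|²` for all unit `n` and all `D`. -/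
theorem ericksen_inequalities_coercivity (K₁ K₂ K₃ K₄ : ℝ)
    (h1 : K₂ + K₄ < 2 * K₁) (h2 : |K₄| < K₂) (h3 : 0 < K₃) :
    ∃ C' > (0:ℝ), ∃ C > (0:ℝ),
      (∀ (n : Fin 3 → ℝ) (D : Matrix (Fin 3) (Fin 3) ℝ), n ⬝ᵥ n = 1 →
        Dᵀ.mulVec n = 0 →
        C' * ∑ i : Fin 3, ∑ j : Fin 3, (D i j) ^ 2 ≤ oseenFrank K₁ K₂ K₃ K₄ n D) ∧
      (∀ (n : Fin 3 → ℝ) (D : Matrix (Fin 3) (Fin 3) ℝ), n ⬝ᵥ n = 1 →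
        oseenFrank K₁ K₂ K₃ K₄ n D ≤ C * ∑ i : Fin 3, ∑ j : Fin 3, (D i j) ^ 2) := by
  obtain ⟨h2a, h2b⟩ := abs_lt.mp h2
  refine ⟨min (min (2 * K₁ - (K₂ + K₄)) (K₂ - K₄)) (min K₃ (K₂ + K₄)),
    lt_min (lt_min (by linarith) (by linarith)) (lt_min h3 (by linarith)),
    3 * |K₁| + 2 * |K₂| + 2 * K₃ + 4 * |K₂ + K₄| + 1,
    by have := abs_nonneg K₁; have := abs_nonneg K₂; have := abs_nonneg (K₂ + K₄); linarith,
    ?_, ?_⟩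
  · intro n D hn hD
    have hn' : n 0 * n 0 + n 1 * n 1 + n 2 * n 2 = 1 := by
      simpa [dotProduct, Fin.sum_univ_three] using hn
    have he0 : D 0 0 * n 0 + D 1 0 * n 1 + D 2 0 * n 2 = 0 := by
      simpa [Matrix.mulVec, dotProduct, Fin.sum_univ_three, mul_comm] using congrFun hD 0
    have he1 : D 0 1 * n 0 + D 1 1 * n 1 + D 2 1 * n 2 = 0 := by
      simpa [Matrix.mulVec, dotProduct, Fin.sum_univ_three, mul_comm] using congrFun hD 1
    have he2 : D 0 2 * n 0 + D 1 2 * n 1 + D 2 2 * n 2 = 0 := by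
      simpa [Matrix.mulVec, dotProduct, Fin.sum_univ_three, mul_comm] using congrFun hD 2
    have hb2 : (0:ℝ) ≤ ((n 1 * (D 1 0 - D 0 1) - n 2 * (D 0 2 - D 2 0)) ^ 2 + (n 2 * (D 2 1 - D 1 2) - n 0 * (D 1 0 - D 0 1)) ^ 2 + (n 0 * (D 0 2 - D 2 0) - n 1 * (D 2 1 - D 1 2)) ^ 2) := by positivity
    have hab : (((n 0 * (D 2 1 - D 1 2)) + (n 1 * (D 0 2 - D 2 0))) + (n 2 * (D 1 0 - D 0 1))) ^ 2 + ((n 1 * (D 1 0 - D 0 1) - n 2 * (D 0 2 - D 2 0)) ^ 2 + (n 2 * (D 2 1 - D 1 2) - n 0 * (D 1 0 - D 0 1)) ^ 2 + (n 0 * (D 0 2 - D 2 0) - n 1 * (D 2 1 - D 1 2)) ^ 2) = (D 0 0 ^ 2 + D 0 1 ^ 2 + D 0 2 ^ 2 + D 1 0 ^ 2 + D 1 1 ^ 2 + D 1 2 ^ 2 + D 2 0 ^ 2 + D 2 1 ^ 2 + D 2 2 ^ 2) - ((((((D 0 0 * D 0 0) + (D 1 1 * D 1 1)) + (D 2 2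 * D 2 2)) + (2 * (D 0 1 * D 1 0))) + (2 * (D 0 2 * D 2 0))) + (2 * (D 1 2 * D 2 1))) := by
      linear_combination ((D 2 1 - D 1 2) * (D 2 1 - D 1 2) + (D 0 2 - D 2 0) * (D 0 2 - D 2 0) + (D 1 0 - D 0 1) * (D 1 0 - D 0 1)) * hn'
    have hkey : (0:ℝ) ≤ 2 * ((((((D 0 0 * D 0 0) + (D 1 1 * D 1 1)) + (D 2 2 * D 2 2)) + (2 * (D 0 1 * D 1 0))) + (2 * (D 0 2 * D 2 0))) + (2 * (D 1 2 * D 2 1))) - ((D 0 0 + D 1 1) + D 2 2) ^ 2 + (((n 0 * (D 2 1 - D 1 2)) + (n 1 * (D 0 2 - D 2 0))) + (n 2 * (D 1 0 - D 0 1))) ^ 2 := by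
      have hid : 2 * ((((((D 0 0 * D 0 0) + (D 1 1 * D 1 1)) + (D 2 2 * D 2 2)) + (2 * (D 0 1 * D 1 0))) + (2 * (D 0 2 * D 2 0))) + (2 * (D 1 2 * D 2 1))) - ((D 0 0 + D 1 1) + D 2 2) ^ 2 + (((n 0 * (D 2 1 - D 1 2)) + (n 1 * (D 0 2 - D 2 0))) + (n 2 * (D 1 0 - D 0 1))) ^ 2 = (((((D 0 0 + D 0 0) - ((((D 0 0 * n 0) + (D 0 1 * n 1)) + (D 0 2 * n 2)) * n 0)) - (n 0 * (((D 0 0 * n 0) + (D 0 1 * n 1)) + (D 0 2 * n 2)))) - (((D 0 0 + D 1 1) + D 2 2) * (1 - (n 0 * n 0)))) ^ 2 + ((((D 0 1 + D 1 0) - ((((D 0 0 * n 0) + (D 0 1 * n 1)) + (D 0 2 * n 2)) * n 1)) - (n 0 * (((D 1 0 * n 0) + (D 1 1 * n 1)) + (D 1 2 * n 2)))) - (((D 0 0 + D 1 1) + D 2 2) * (0 - (n 0 * n 1)))) ^ 2 + ((((D 0 2 + D 2 0) - ((((D 0 0 * n 0) + (D 0 1 * n 1)) + (D 0 2 * n 2))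 * n 2)) - (n 0 * (((D 2 0 * n 0) + (D 2 1 * n 1)) + (D 2 2 * n 2)))) - (((D 0 0 + D 1 1) + D 2 2) * (0 - (n 0 * n 2)))) ^ 2 + ((((D 1 0 + D 0 1) - ((((D 1 0 * n 0) + (D 1 1 * n 1)) + (D 1 2 * n 2)) * n 0)) - (n 1 * (((D 0 0 * n 0) + (D 0 1 * n 1)) + (D 0 2 * n 2)))) - (((D 0 0 + D 1 1) + D 2 2) * (0 - (n 1 * n 0)))) ^ 2 + ((((D 1 1 + D 1 1) - ((((D 1 0 * n 0) + (D 1 1 * n 1)) + (D 1 2 * n 2)) * n 1)) - (n 1 * (((D 1 0 * n 0) + (D 1 1 * n 1)) + (D 1 2 * n 2)))) - (((D 0 0 + D 1 1) + D 2 2) * (1 - (n 1 * n 1)))) ^ 2 + ((((D 1 2 + D 2 1) - ((((D 1 0 * n 0) + (D 1 1 * n 1)) + (D 1 2 * n 2)) * n 2)) - (n 1 * (((D 2 0 * n 0) + (D 2 1 * n 1)) + (D 2 2 * n 2)))) - (((D 0 0 + D 1 1) + D 2 2) * (0 - (n 1 * n 2)))) ^ 2 + ((((D 2 0 + D 0 2)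 - ((((D 2 0 * n 0) + (D 2 1 * n 1)) + (D 2 2 * n 2)) * n 0)) - (n 2 * (((D 0 0 * n 0) + (D 0 1 * n 1)) + (D 0 2 * n 2)))) - (((D 0 0 + D 1 1) + D 2 2) * (0 - (n 2 * n 0)))) ^ 2 + ((((D 2 1 + D 1 2) - ((((D 2 0 * n 0) + (D 2 1 * n 1)) + (D 2 2 * n 2)) * n 1)) - (n 2 * (((D 1 0 * n 0) + (D 1 1 * n 1)) + (D 1 2 * n 2)))) - (((D 0 0 + D 1 1) + D 2 2) * (0 - (n 2 * n 1)))) ^ 2 + ((((D 2 2 + D 2 2) - ((((D 2 0 * n 0) + (D 2 1 * n 1)) + (D 2 2 * n 2)) * n 2)) - (n 2 * (((D 2 0 * n 0) + (D 2 1 * n 1)) + (D 2 2 * n 2)))) - (((D 0 0 + D 1 1) + D 2 2) * (1 - (n 2 * n 2)))) ^ 2) / 2 := by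
        linear_combination (((((((-(((((((D 0 0 * n 0) + (D 1 0 * n 1)) + (D 2 0 * n 2)) * n 0) + ((((D 0 1 * n 0) + (D 1 1 * n 1)) + (D 2 1 * n 2)) * n 1)) + ((((D 0 2 * n 0) + (D 1 2 * n 1)) + (D 2 2 * n 2)) * n 2)) * n 0)) + (2 * (((D 0 0 * n 0) + (D 0 1 * n 1)) + (D 0 2 * n 2)))) + (((D 0 0 * n 0) + (D 1 0 * n 1)) + (D 2 0 * n 2))) + (2 * (((D 0 2 - D 2 0) * n 2) - ((D 1 0 - D 0 1) * n 1)))) - (2 * (((D 0 0 + D 1 1) + D 2 2) * n 0))) + (2 * ((((D 0 0 + D 1 1) + D 2 2) * n 0) * ((((n 0 * n 0) + (n 1 * n 1)) + (n 2 * n 2)) - 1))))) * he0 + (((((((-(((((((D 0 0 * n 0) + (D 1 0 * n 1)) + (D 2 0 * n 2)) * n 0) + ((((D 0 1 * n 0) + (D 1 1 * n 1)) + (D 2 1 * n 2)) * n 1)) + ((((D 0 2 * n 0) + (D 1 2 * n 1)) + (D 2 2 * n 2)) * n 2)) * n 1)) + (2 * (((D 1 0 * n 0) + (D 1 1 * n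 1)) + (D 1 2 * n 2)))) + (((D 0 1 * n 0) + (D 1 1 * n 1)) + (D 2 1 * n 2))) + (2 * (((D 1 0 - D 0 1) * n 0) - ((D 2 1 - D 1 2) * n 2)))) - (2 * (((D 0 0 + D 1 1) + D 2 2) * n 1))) + (2 * ((((D 0 0 + D 1 1) + D 2 2) * n 1) * ((((n 0 * n 0) + (n 1 * n 1)) + (n 2 * n 2)) - 1))))) * he1 + (((((((-(((((((D 0 0 * n 0) + (D 1 0 * n 1)) + (D 2 0 * n 2)) * n 0) + ((((D 0 1 * n 0) + (D 1 1 * n 1)) + (D 2 1 * n 2)) * n 1)) + ((((D 0 2 * n 0) + (D 1 2 * n 1)) + (D 2 2 * n 2)) * n 2)) * n 2)) + (2 * (((D 2 0 * n 0) + (D 2 1 * n 1)) + (D 2 2 * n 2)))) + (((D 0 2 * n 0) + (D 1 2 * n 1)) + (D 2 2 * n 2))) + (2 * (((D 2 1 - D 1 2) * n 1) - ((D 0 2 - D 2 0) * n 0)))) - (2 * (((D 0 0 + D 1 1) + D 2 2) * n 2))) + (2 * ((((D 0 0 + D 1 1) + D 2 2) * n 2) * ((((n 0 * n 0) + (n 1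 * n 1)) + (n 2 * n 2)) - 1))))) * he2 + (((((-((((((D 0 0 * n 0) + (D 0 1 * n 1)) + (D 0 2 * n 2)) * (((D 0 0 * n 0) + (D 0 1 * n 1)) + (D 0 2 * n 2))) + ((((D 1 0 * n 0) + (D 1 1 * n 1)) + (D 1 2 * n 2)) * (((D 1 0 * n 0) + (D 1 1 * n 1)) + (D 1 2 * n 2)))) + ((((D 2 0 * n 0) + (D 2 1 * n 1)) + (D 2 2 * n 2)) * (((D 2 0 * n 0) + (D 2 1 * n 1)) + (D 2 2 * n 2))))) - (((((((n 0 * n 0) + (n 1 * n 1)) + (n 2 * n 2)) - 1) * ((D 0 0 + D 1 1) + D 2 2)) * ((D 0 0 + D 1 1) + D 2 2)) / 2)) + (((((((((D 0 0 * D 0 0) + (D 0 1 * D 0 1)) + (D 0 2 * D 0 2)) + (D 1 0 * D 1 0)) + (D 1 1 * D 1 1)) + (D 1 2 * D 1 2)) + (D 2 0 * D 2 0)) + (D 2 1 * D 2 1)) + (D 2 2 * D 2 2))) - ((((((D 0 0 * D 0 0) + (D 1 1 * D 1 1)) + (D 2 2 * D 2 2)) + (2 * (D 0 1 * D 1 0)))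 + (2 * (D 0 2 * D 2 0))) + (2 * (D 1 2 * D 2 1))))) * hn'
      rw [hid]; positivity
    have hW : oseenFrank K₁ K₂ K₃ K₄ n D =
        K₁ * ((D 0 0 + D 1 1) + D 2 2) ^ 2 + K₂ * (((n 0 * (D 2 1 - D 1 2)) + (n 1 * (D 0 2 - D 2 0))) + (n 2 * (D 1 0 - D 0 1))) ^ 2 + K₃ * ((n 1 * (D 1 0 - D 0 1) - n 2 * (D 0 2 - D 2 0)) ^ 2 + (n 2 * (D 2 1 - D 1 2) - n 0 * (D 1 0 - D 0 1)) ^ 2 + (n 0 * (D 0 2 - D 2 0) - n 1 * (D 2 1 - D 1 2)) ^ 2) + (K₂ + K₄) * (((((((D 0 0 * D 0 0) + (D 1 1 * D 1 1)) + (D 2 2 * D 2 2)) + (2 * (D 0 1 * D 1 0))) + (2 * (D 0 2 * D 2 0))) + (2 * (D 1 2 * D 2 1))) - ((D 0 0 + D 1 1) + D 2 2) ^ 2) := by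
      simp [oseenFrank, axialVec, Matrix.trace, Matrix.diag, Matrix.mul_apply,
        dotProduct, Fin.sum_univ_three, cross_apply]
      ring
    have hNs : (∑ i : Fin 3, ∑ j : Fin 3, (D i j) ^ 2) = (D 0 0 ^ 2 + D 0 1 ^ 2 + D 0 2 ^ 2 + D 1 0 ^ 2 + D 1 1 ^ 2 + D 1 2 ^ 2 + D 2 0 ^ 2 + D 2 1 ^ 2 + D 2 2 ^ 2) := by
      simp [Fin.sum_univ_three]; ring
    rw [hW, hNs]
    exact aux_lower K₁ K₂ K₃ K₄ _ _ _ _ _ h1 h2 h3 hb2 hab hkey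
  · intro n D hn
    have hn' : n 0 * n 0 + n 1 * n 1 + n 2 * n 2 = 1 := by
      simpa [dotProduct, Fin.sum_univ_three] using hn
    have hb2 : (0:ℝ) ≤ ((n 1 * (D 1 0 - D 0 1) - n 2 * (D 0 2 - D 2 0)) ^ 2 + (n 2 * (D 2 1 - D 1 2) - n 0 * (D 1 0 - D 0 1)) ^ 2 + (n 0 * (D 0 2 - D 2 0) - n 1 * (D 2 1 - D 1 2)) ^ 2) := by positivity
    have hab : (((n 0 * (D 2 1 - D 1 2)) + (n 1 * (D 0 2 - D 2 0))) + (n 2 * (D 1 0 - D 0 1))) ^ 2 + ((n 1 * (D 1 0 - D 0 1) - n 2 * (D 0 2 - D 2 0)) ^ 2 + (n 2 * (D 2 1 - D 1 2) - n 0 * (D 1 0 - D 0 1)) ^ 2 + (n 0 * (D 0 2 - D 2 0) - n 1 * (D 2 1 - D 1 2)) ^ 2) = (D 0 0 ^ 2 + D 0 1 ^ 2 + D 0 2 ^ 2 + D 1 0 ^ 2 + D 1 1 ^ 2 + D 1 2 ^ 2 + D 2 0 ^ 2 + D 2 1 ^ 2 + D 2 2 ^ 2) - ((((((D 0 0 *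 D 0 0) + (D 1 1 * D 1 1)) + (D 2 2 * D 2 2)) + (2 * (D 0 1 * D 1 0))) + (2 * (D 0 2 * D 2 0))) + (2 * (D 1 2 * D 2 1))) := by
      linear_combination ((D 2 1 - D 1 2) * (D 2 1 - D 1 2) + (D 0 2 - D 2 0) * (D 0 2 - D 2 0) + (D 1 0 - D 0 1) * (D 1 0 - D 0 1)) * hn'
    have ht : ((D 0 0 + D 1 1) + D 2 2) ^ 2 ≤ 3 * (D 0 0 ^ 2 + D 0 1 ^ 2 + D 0 2 ^ 2 + D 1 0 ^ 2 + D 1 1 ^ 2 + D 1 2 ^ 2 + D 2 0 ^ 2 + D 2 1 ^ 2 + D 2 2 ^ 2) := by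
      nlinarith [sq_nonneg (D 0 0 - D 1 1), sq_nonneg (D 0 0 - D 2 2), sq_nonneg (D 1 1 - D 2 2),
        sq_nonneg (D 0 1), sq_nonneg (D 0 2), sq_nonneg (D 1 0), sq_nonneg (D 1 2),
        sq_nonneg (D 2 0), sq_nonneg (D 2 1)]
    have htr : ((((((D 0 0 * D 0 0) + (D 1 1 * D 1 1)) + (D 2 2 * D 2 2)) + (2 * (D 0 1 * D 1 0))) + (2 * (D 0 2 * D 2 0))) + (2 * (D 1 2 * D 2 1))) ≤ (D 0 0 ^ 2 + D 0 1 ^ 2 + D 0 2 ^ 2 + D 1 0 ^ 2 + D 1 1 ^ 2 + D 1 2 ^ 2 + D 2 0 ^ 2 + D 2 1 ^ 2 + D 2 2 ^ 2) := by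
      nlinarith [sq_nonneg (D 0 1 - D 1 0), sq_nonneg (D 0 2 - D 2 0), sq_nonneg (D 1 2 - D 2 1),
        sq_nonneg (D 0 0 - D 0 0)]
    have htr2 : -(D 0 0 ^ 2 + D 0 1 ^ 2 + D 0 2 ^ 2 + D 1 0 ^ 2 + D 1 1 ^ 2 + D 1 2 ^ 2 + D 2 0 ^ 2 + D 2 1 ^ 2 + D 2 2 ^ 2) ≤ ((((((D 0 0 * D 0 0) + (D 1 1 * D 1 1)) + (D 2 2 * D 2 2)) + (2 * (D 0 1 * D 1 0))) + (2 * (D 0 2 * D 2 0))) + (2 * (D 1 2 * D 2 1))) := by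
      nlinarith [sq_nonneg (D 0 1 + D 1 0), sq_nonneg (D 0 2 + D 2 0), sq_nonneg (D 1 2 + D 2 1),
        sq_nonneg (D 0 0), sq_nonneg (D 1 1), sq_nonneg (D 2 2)]
    have hN : (0:ℝ) ≤ (D 0 0 ^ 2 + D 0 1 ^ 2 + D 0 2 ^ 2 + D 1 0 ^ 2 + D 1 1 ^ 2 + D 1 2 ^ 2 + D 2 0 ^ 2 + D 2 1 ^ 2 + D 2 2 ^ 2) := by positivity
    have hW : oseenFrank K₁ K₂ K₃ K₄ n D =
        K₁ * ((D 0 0 + D 1 1) + D 2 2) ^ 2 + K₂ * (((n 0 * (D 2 1 - D 1 2)) + (n 1 * (D 0 2 - D 2 0))) + (n 2 * (D 1 0 - D 0 1))) ^ 2 + K₃ * ((n 1 * (D 1 0 - D 0 1) - n 2 * (D 0 2 - D 2 0)) ^ 2 + (n 2 * (D 2 1 - D 1 2) - n 0 * (D 1 0 - D 0 1)) ^ 2 + (n 0 * (D 0 2 - D 2 0) - n 1 * (D 2 1 - D 1 2)) ^ 2) + (K₂ + K₄) * (((((((D 0 0 * D 0 0) + (D 1 1 * D 1 1)) + (D 2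 2 * D 2 2)) + (2 * (D 0 1 * D 1 0))) + (2 * (D 0 2 * D 2 0))) + (2 * (D 1 2 * D 2 1))) - ((D 0 0 + D 1 1) + D 2 2) ^ 2) := by
      simp [oseenFrank, axialVec, Matrix.trace, Matrix.diag, Matrix.mul_apply,
        dotProduct, Fin.sum_univ_three, cross_apply]
      ring
    have hNs : (∑ i : Fin 3, ∑ j : Fin 3, (D i j) ^ 2) = (D 0 0 ^ 2 + D 0 1 ^ 2 + D 0 2 ^ 2 + D 1 0 ^ 2 + D 1 1 ^ 2 + D 1 2 ^ 2 + D 2 0 ^ 2 + D 2 1 ^ 2 + D 2 2 ^ 2) := by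
      simp [Fin.sum_univ_three]; ring
    rw [hW, hNs]
    exact aux_upper K₁ K₂ K₃ K₄ _ _ _ _ _ h3 hb2 hab ht htr htr2 hN
end

section
/- Let $b>0$, $c>0$ and $a\in\mathbb{R}$, and define $\psi_B(Q)=a\,\mathrm{tr}\,Q^2-\tfrac{2b}{3}\,\mathrm{tr}\,Q^3+c\,\mathrm{tr}\,Q^4$ on the set of symmetric traceless real $3\times 3$ matrices. If $a\ge \tfrac{b^2}{27c}$ then $\psi_B$ attains its minimum over this set at $Q=0$; if $a\le \tfrac{b^2}{27c}$ then $\psi_B$ attains its minimum over this set at the uniaxial matrices $Q=s_+\big(n\otimes n-\tfrac13\mathbf{1}\big)$ with $n$ a unit vector and $s_+=\tfrac{b+\sqrt{b^2-24ac}}{4c}$. -/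
set_option maxHeartbeats 1000000

open Matrix

/-- Trace of powers of a Hermitian matrix equals the sum of powers of its eigenvalues. -/
lemma trace_pow_eq_sum_eigenvalues {A : Matrix (Fin 3) (Fin 3) ℝ} (hA : A.IsHermitian) (k : ℕ) :
    (A ^ (k + 1)).trace = ∑ i, hA.eigenvalues i ^ (k + 1) := by
  set U : Matrix (Fin 3) (Fin 3) ℝ := (hA.eigenvectorUnitary : Matrix (Fin 3) (Fin 3) ℝ) with hUdef
  set D : Matrix (Fin 3) (Fin 3) ℝ := diagonal (RCLike.ofReal ∘ hA.eigenvalues) with hDdef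
  have hU : star U * U = 1 := by
    exact Unitary.coe_star_mul_self hA.eigenvectorUnitary
  have key : ∀ m : ℕ, A ^ (m + 1) = U * D ^ (m + 1) * star U := by
    intro m
    induction m with
    | zero => rw [hUdef, hDdef]; simpa using hA.spectral_theorem
    | succ m ih =>
      have h1 : A = U * D * star U := by rw [hUdef, hDdef]; simpa using hA.spectral_theorem
      calc A ^ (m + 2) = A ^ (m + 1) * A := by rw [pow_succ]
        _ = U * D ^ (m + 1) * star U * (U * D * star U) := by rw [ih, ← h1]
        _ = U * D ^ (m + 1) * (star U * U) * D * star U := by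
            simp only [Matrix.mul_assoc]
        _ = U * D ^ (m + 2) * star U := by
            rw [hU]
            simp only [Matrix.mul_one]
            simp only [pow_succ, Matrix.mul_assoc]
  rw [key k, Matrix.trace_mul_cycle, hU, Matrix.one_mul,
    hDdef, Matrix.diagonal_pow, Matrix.trace_diagonal]
  simp [Function.comp]

/-- Quartic-power identity for traceless triples. -/
lemma sum_pow4_eq_lldg (x y z : ℝ) (h : x + y + z = 0) :
    x ^ 4 + y ^ 4 + z ^ 4 = (x ^ 2 + y ^ 2 + z ^ 2) ^ 2 / 2 := by
  have hz : z = -x - y := by linarith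
  rw [hz]; ring

/-- Cubic-power inequality for traceless triples. -/
lemma cube_sq_le_lldg (x y z : ℝ) (h : x + y + z = 0) :
    (x ^ 3 + y ^ 3 + z ^ 3) ^ 2 ≤ (x ^ 2 + y ^ 2 + z ^ 2) ^ 3 / 6 := by
  have hz : z = -x - y := by linarith
  rw [hz]
  nlinarith [sq_nonneg ((x - y) * (x + 2 * y) * (2 * x + y)), sq_nonneg (x + y), sq_nonneg (x - y)]

lemma scalar1_lldg (a b c p t : ℝ) (hb : 0 < b) (hc : 0 < c) (ha : b ^ 2 / (27 * c) ≤ a)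
    (hp : 0 ≤ p) (ht : t ^ 2 ≤ p ^ 3 / 6) :
    0 ≤ a * p - (2 * b / 3) * t + c * (p ^ 2 / 2) := by
  have hac : b ^ 2 ≤ 27 * (a * c) := by
    rw [div_le_iff₀ (by positivity)] at ha; nlinarith
  have ha0 : 0 < a := lt_of_lt_of_le (by positivity) ha
  have hX : 0 ≤ a * p + c * (p ^ 2 / 2) := by positivity
  have hp3 : 0 ≤ p ^ 3 := by positivity
  have hsq : ((2 * b / 3) * t) ^ 2 ≤ (a * p + c * (p ^ 2 / 2)) ^ 2 := by
    nlinarith [sq_nonneg (a * p - c * (p ^ 2 / 2)), sq_nonneg b, mul_nonneg hp3 (sq_nonneg b)]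
  nlinarith [hsq, hX]

lemma scalar2_lldg (a b c p t : ℝ) (hb : 0 < b) (hc : 0 < c) (ha : a ≤ b ^ 2 / (27 * c))
    (hp : 0 ≤ p) (ht : t ^ 2 ≤ p ^ 3 / 6) :
    2 / 3 * a * ((b + Real.sqrt (b ^ 2 - 24 * a * c)) / (4 * c)) ^ 2
      - 4 * b / 27 * ((b + Real.sqrt (b ^ 2 - 24 * a * c)) / (4 * c)) ^ 3
      + 2 * c / 9 * ((b + Real.sqrt (b ^ 2 - 24 * a * c)) / (4 * c)) ^ 4
      ≤ a * p - (2 * b / 3) * t + c * (p ^ 2 / 2) := by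
  have hac : 27 * (a * c) ≤ b ^ 2 := by
    rw [le_div_iff₀ (by positivity)] at ha; nlinarith
  have hD : b ^ 2 / 9 ≤ b ^ 2 - 24 * a * c := by nlinarith
  have hD0 : 0 ≤ b ^ 2 - 24 * a * c := le_trans (by positivity) hD
  set r := Real.sqrt (b ^ 2 - 24 * a * c) with hrdef
  have hr2 : r ^ 2 = b ^ 2 - 24 * a * c := Real.sq_sqrt hD0
  have hr0 : 0 ≤ r := Real.sqrt_nonneg _
  have hrb : b / 3 ≤ r := by
    rw [hrdef, show b / 3 = Real.sqrt ((b / 3) ^ 2) by rw [Real.sqrt_sq (by positivity)]]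
    exact Real.sqrt_le_sqrt (by nlinarith)
  set sp := (b + r) / (4 * c) with hspdef
  have hsp0 : 0 ≤ sp := by positivity
  set s := Real.sqrt (3 * p / 2) with hsdef
  have hs0 : 0 ≤ s := Real.sqrt_nonneg _
  have hs2 : s ^ 2 = 3 * p / 2 := Real.sq_sqrt (by positivity)
  have hpval : p = 2 * s ^ 2 / 3 := by linarith
  have hts : t ≤ 2 * s ^ 3 / 9 := by
    have h1 : t ^ 2 ≤ (2 * s ^ 3 / 9) ^ 2 := by
      rw [hpval] at ht; nlinarith [ht]
    have h2 : 0 ≤ 2 * s ^ 3 / 9 := by positivity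
    nlinarith [h1, h2]
  have hstep1 : 2 / 3 * a * s ^ 2 - 4 * b / 27 * s ^ 3 + 2 * c / 9 * s ^ 4
      ≤ a * p - (2 * b / 3) * t + c * (p ^ 2 / 2) := by
    rw [hpval]; nlinarith [hts, hb]
  have ha' : a = (b ^ 2 - r ^ 2) / (24 * c) := by
    rw [hr2]; field_simp; ring
  have hident : 2 / 3 * a * s ^ 2 - 4 * b / 27 * s ^ 3 + 2 * c / 9 * s ^ 4
      - (2 / 3 * a * sp ^ 2 - 4 * b / 27 * sp ^ 3 + 2 * c / 9 * sp ^ 4)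
      = 2 * c / 9 * (s - sp) ^ 2
        * (s ^ 2 + (3 * r - b) / (6 * c) * s + sp * (3 * r - b) / (12 * c)) := by
    rw [ha', hspdef]; field_simp; ring
  have hq : 0 ≤ s ^ 2 + (3 * r - b) / (6 * c) * s + sp * (3 * r - b) / (12 * c) := by
    have h3rb : 0 ≤ 3 * r - b := by linarith
    have h1 : 0 ≤ (3 * r - b) / (6 * c) * s :=
      mul_nonneg (div_nonneg h3rb (by positivity)) hs0
    have h2 : 0 ≤ sp * (3 * r - b) / (12 * c) :=
      div_nonneg (mul_nonneg hsp0 h3rb) (by positivity)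
    nlinarith [sq_nonneg s]
  have hstep2 : 2 / 3 * a * sp ^ 2 - 4 * b / 27 * sp ^ 3 + 2 * c / 9 * sp ^ 4
      ≤ 2 / 3 * a * s ^ 2 - 4 * b / 27 * s ^ 3 + 2 * c / 9 * s ^ 4 := by
    nlinarith [hident,
      mul_nonneg (mul_nonneg (by positivity : (0:ℝ) ≤ 2 * c / 9) (sq_nonneg (s - sp))) hq]
  linarith

/-- The quartic Landau–de Gennes bulk free-energy density
`ψ_B(Q) = a tr Q² - (2b/3) tr Q³ + c tr Q⁴`. -/
noncomputable def psiB (a b c : ℝ) (Q : Matrix (Fin 3) (Fin 3) ℝ) : ℝ :=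
  a * (Q * Q).trace - (2 * b / 3) * (Q * Q * Q).trace + c * (Q * Q * Q * Q).trace

/-- `ψ_B(Q)` in terms of the two relevant scalar invariants, for `Q` symmetric traceless. -/
lemma psiB_eval_lldg (a b c : ℝ) (Q : Matrix (Fin 3) (Fin 3) ℝ) (hQs : Q.IsSymm)
    (hQt : Q.trace = 0) :
    ∃ p t : ℝ, 0 ≤ p ∧ t ^ 2 ≤ p ^ 3 / 6 ∧
      psiB a b c Q = a * p - (2 * b / 3) * t + c * (p ^ 2 / 2) := by
  have hH : Q.IsHermitian := by
    rwa [Matrix.IsHermitian, Matrix.conjTranspose_eq_transpose_of_trivial]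
  set e := hH.eigenvalues with hedef
  have h1 : Q.trace = e 0 + e 1 + e 2 := by
    have := trace_pow_eq_sum_eigenvalues hH 0
    simpa [Fin.sum_univ_three] using this
  have hsum : e 0 + e 1 + e 2 = 0 := by rw [← h1, hQt]
  have h2 : (Q * Q).trace = e 0 ^ 2 + e 1 ^ 2 + e 2 ^ 2 := by
    have := trace_pow_eq_sum_eigenvalues hH 1
    rw [show Q ^ (1 + 1) = Q * Q by rw [pow_succ, pow_one]] at this
    simpa [Fin.sum_univ_three] using this
  have h3 : (Q * Q * Q).trace = e 0 ^ 3 + e 1 ^ 3 + e 2 ^ 3 := by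
    have := trace_pow_eq_sum_eigenvalues hH 2
    rw [show Q ^ (2 + 1) = Q * Q * Q by rw [pow_succ, pow_succ, pow_one]] at this
    simpa [Fin.sum_univ_three] using this
  have h4 : (Q * Q * Q * Q).trace = e 0 ^ 4 + e 1 ^ 4 + e 2 ^ 4 := by
    have := trace_pow_eq_sum_eigenvalues hH 3
    rw [show Q ^ (3 + 1) = Q * Q * Q * Q by rw [pow_succ, pow_succ, pow_succ, pow_one]] at this
    simpa [Fin.sum_univ_three] using this
  refine ⟨e 0 ^ 2 + e 1 ^ 2 + e 2 ^ 2, e 0 ^ 3 + e 1 ^ 3 + e 2 ^ 3, by positivity,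
    cube_sq_le_lldg _ _ _ hsum, ?_⟩
  rw [psiB, h2, h3, h4, sum_pow4_eq_lldg _ _ _ hsum]

/-- for `b, c > 0`, if `a ≥ b²/(27c)` then `ψ_B` attains its minimum over
symmetric traceless matrices at `Q = 0`; if `a ≤ b²/(27c)` it attains its minimum at the
uniaxial matrices `Q = s₊(n⊗n - 1/3)` with `n` a unit vector and
`s₊ = (b + √(b² - 24ac))/(4c)`. -/
theorem landau_de_gennes_bulk_minimizers (a b c : ℝ) (hb : 0 < b) (hc : 0 < c) :
    (b ^ 2 / (27 * c) ≤ a →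
      ∀ Q : Matrix (Fin 3) (Fin 3) ℝ, Q.IsSymm → Q.trace = 0 →
        psiB a b c 0 ≤ psiB a b c Q) ∧
    (a ≤ b ^ 2 / (27 * c) →
      ∀ n : Fin 3 → ℝ, n ⬝ᵥ n = 1 →
        ((( b + Real.sqrt (b ^ 2 - 24 * a * c)) / (4 * c)) •
            (vecMulVec n n - (1 / 3 : ℝ) • (1 : Matrix (Fin 3) (Fin 3) ℝ))).IsSymm ∧
        ((( b + Real.sqrt (b ^ 2 - 24 * a * c)) / (4 * c)) •
            (vecMulVec n n - (1 / 3 : ℝ) • (1 : Matrix (Fin 3) (Fin 3) ℝ))).trace = 0 ∧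
        ∀ Q : Matrix (Fin 3) (Fin 3) ℝ, Q.IsSymm → Q.trace = 0 →
          psiB a b c
            ((( b + Real.sqrt (b ^ 2 - 24 * a * c)) / (4 * c)) •
              (vecMulVec n n - (1 / 3 : ℝ) • (1 : Matrix (Fin 3) (Fin 3) ℝ)))
            ≤ psiB a b c Q) := by
  constructor
  · intro ha Q hQs hQt
    obtain ⟨p, t, hp, ht, hval⟩ := psiB_eval_lldg a b c Q hQs hQt
    have h0 : psiB a b c 0 = 0 := by simp [psiB]
    rw [h0, hval]
    exact scalar1_lldg a b c p t hb hc ha hp ht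
  · intro ha n hn
    have hPP : vecMulVec n n * vecMulVec n n = vecMulVec n n := by
      ext i j
      simp only [Matrix.mul_apply, Matrix.vecMulVec_apply, Fin.sum_univ_three]
      have hn' : n 0 * n 0 + n 1 * n 1 + n 2 * n 2 = 1 := by
        simpa [dotProduct, Fin.sum_univ_three] using hn
      linear_combination n i * n j * hn'
    have hPt : (vecMulVec n n).trace = 1 := by
      simpa [Matrix.trace, Matrix.diag, Matrix.vecMulVec_apply, dotProduct,
        Fin.sum_univ_three] using hn
    have hPs : (vecMulVec n n).IsSymm := by
      rw [Matrix.IsSymm]; ext i j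
      simp [Matrix.transpose_apply, Matrix.vecMulVec_apply, mul_comm]
    set P := vecMulVec n n with hPdef
    set M : Matrix (Fin 3) (Fin 3) ℝ := P - (1 / 3 : ℝ) • 1 with hMdef
    have hM2 : M * M = (1 / 3 : ℝ) • P + (1 / 9 : ℝ) • 1 := by
      rw [hMdef]
      simp only [sub_mul, mul_sub, smul_mul_assoc, mul_smul_comm, hPP, Matrix.one_mul,
        Matrix.mul_one, smul_smul]
      module
    have hM3 : M * M * M = (1 / 3 : ℝ) • P - (1 / 27 : ℝ) • 1 := by
      rw [hM2, hMdef]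
      simp only [add_mul, sub_mul, mul_sub, smul_mul_assoc, mul_smul_comm, hPP, Matrix.one_mul,
        Matrix.mul_one, smul_smul]
      module
    have hM4 : M * M * M * M = (5 / 27 : ℝ) • P + (1 / 81 : ℝ) • 1 := by
      rw [hM3, hMdef]
      simp only [add_mul, sub_mul, mul_sub, smul_mul_assoc, mul_smul_comm, hPP, Matrix.one_mul,
        Matrix.mul_one, smul_smul]
      module
    have htr1 : (1 : Matrix (Fin 3) (Fin 3) ℝ).trace = 3 := by
      simp [Matrix.trace_one]
    have ht2 : (M * M).trace = 2 / 3 := by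
      rw [hM2]; simp [Matrix.trace_add, Matrix.trace_smul, hPt, htr1]; norm_num
    have ht3 : (M * M * M).trace = 2 / 9 := by
      rw [hM3]; simp [Matrix.trace_sub, Matrix.trace_smul, hPt, htr1]; norm_num
    have ht4 : (M * M * M * M).trace = 2 / 9 := by
      rw [hM4]; simp [Matrix.trace_add, Matrix.trace_smul, hPt, htr1]; norm_num
    have hMs : M.IsSymm := by
      rw [hMdef, Matrix.IsSymm, Matrix.transpose_sub, Matrix.transpose_smul,
        Matrix.transpose_one, hPs]
    have hMt : M.trace = 0 := by
      rw [hMdef, Matrix.trace_sub, Matrix.trace_smul, hPt, htr1]; norm_num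
    have key : ∀ s : ℝ, psiB a b c (s • M)
        = 2 / 3 * a * s ^ 2 - 4 * b / 27 * s ^ 3 + 2 * c / 9 * s ^ 4 := by
      intro s
      rw [psiB]
      simp only [smul_mul_assoc, mul_smul_comm, Matrix.trace_smul, smul_eq_mul, ht2, ht3, ht4]
      ring
    set sp := (b + Real.sqrt (b ^ 2 - 24 * a * c)) / (4 * c) with hspdef
    refine ⟨?_, ?_, ?_⟩
    · rw [Matrix.IsSymm, Matrix.transpose_smul, hMs]
    · rw [Matrix.trace_smul, hMt, smul_zero]
    · intro Q hQs hQt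
      obtain ⟨p, t, hp, ht, hval⟩ := psiB_eval_lldg a b c Q hQs hQt
      rw [hval, key sp]
      exact scalar2_lldg a b c p t hb hc ha hp ht
end
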